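/- Let H be a real Hilbert space and let {C_n} and C_0 be nonempty closed convex subsets of H such that C_n Mosco-converges to C_0. Then for every f ∈ H, the projections u_n(f) = proj_{C_n}(f) converge strongly to u_0(f) = proj_{C_0}(f), i.e. ‖u_n(f) − u_0(f)‖ → 0. -/

import Mathlib

open Filter Topology RealInnerProductSpace

/-- Bounded sequences in a real Hilbert space have weakly convergent subsequences. -/
theorem exists_weak_subseq
    {H : Type*} [NormedAddCommGroup H] [InnerProductSpace ℝ H] [CompleteSpace H]
    (u : ℕ → H) (R : ℝ) (hR : ∀ n, ‖u n‖ ≤ R) :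
    ∃ φ : ℕ → ℕ, StrictMono φ ∧ ∃ z : H,
      ∀ w : H, Tendsto (fun i => ⟪u (φ i), w⟫) atTop (𝓝 ⟪z, w⟫) := by
  have hR0 : 0 ≤ R := le_trans (norm_nonneg _) (hR 0)
  -- the closed span of the range of `u`, a separable closed subspace
  set K : Submodule ℝ H := (Submodule.span ℝ (Set.range u)).topologicalClosure with hK
  have hKclosed : IsClosed (K : Set H) := Submodule.isClosed_topologicalClosure _
  haveI : CompleteSpace K := hKclosed.completeSpace_coe
  have huK : ∀ n, u n ∈ K :=
    fun n => Submodule.le_topologicalClosure _ (Submodule.subset_span ⟨n, rfl⟩)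
  -- a countable dense sequence for `K`
  have hsep : TopologicalSpace.IsSeparable (K : Set H) := by
    have h1 : TopologicalSpace.IsSeparable
        ((Submodule.span ℝ (Set.range u) : Submodule ℝ H) : Set H) :=
      (Set.countable_range u).isSeparable.span
    have : (K : Set H) = closure ((Submodule.span ℝ (Set.range u) : Submodule ℝ H) : Set H) :=
      rfl
    rw [this]
    exact h1.closure
  obtain ⟨c, hcct, hcsub⟩ := hsep
  obtain ⟨d, hd⟩ : ∃ d : ℕ → H, insert (0 : H) c = Set.range d :=
    (hcct.insert 0).exists_eq_range (Set.insert_nonempty _ _)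
  have hKd : (K : Set H) ⊆ closure (Set.range d) := by
    rw [← hd]
    exact hcsub.trans (closure_mono (Set.subset_insert _ _))
  -- diagonal extraction via sequential compactness of a product of intervals
  set T : ℕ → ℕ → ℝ := fun n k => ⟪u n, d k⟫ with hT
  have hScomp : IsCompact (Set.univ.pi fun k => Metric.closedBall (0 : ℝ) (R * ‖d k‖)) :=
    isCompact_univ_pi fun k => isCompact_closedBall _ _
  have hTS : ∀ n, T n ∈ Set.univ.pi fun k => Metric.closedBall (0 : ℝ) (R * ‖d k‖) := by
    intro n k _
    simp only [Metric.mem_closedBall, Real.dist_eq, sub_zero]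
    calc |⟪u n, d k⟫| ≤ ‖u n‖ * ‖d k‖ := abs_real_inner_le_norm _ _
      _ ≤ R * ‖d k‖ := by gcongr; exact hR n
  obtain ⟨g, -, φ, hφ, hg⟩ := hScomp.isSeqCompact fun n => hTS n
  refine ⟨φ, hφ, ?_⟩
  have hgk : ∀ k, Tendsto (fun i => ⟪u (φ i), d k⟫) atTop (𝓝 (g k)) := by
    intro k
    exact (tendsto_pi_nhds.1 hg) k
  -- for every `w`, the sequence of inner products is Cauchy
  have hcauchy : ∀ w : H, CauchySeq fun i => ⟪u (φ i), w⟫ := by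
    intro w
    set Pw : H := (K.orthogonalProjectionOnto w : H) with hPw
    have hperp : ∀ n, ⟪u n, w⟫ = ⟪u n, Pw⟫ := by
      intro n
      have h1 : w - Pw ∈ Kᗮ := by
        have h := K.sub_starProjection_mem_orthogonal w
        rwa [Submodule.starProjection_apply] at h
      have h2 : ⟪u n, w - Pw⟫ = 0 := h1 (u n) (huK n)
      have := inner_sub_right (𝕜 := ℝ) (u n) w Pw
      linarith [this, h2]
    rw [Metric.cauchySeq_iff]
    intro ε hε
    -- approximate Pw by some d k
    have hPwK : Pw ∈ closure (Set.range d) := hKd (K.orthogonalProjectionOnto w).2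
    obtain ⟨y, ⟨k, rfl⟩, hy⟩ :=
      Metric.mem_closure_iff.1 hPwK (ε / 3 / (R + 1)) (by positivity)
    have hdk : ‖Pw - d k‖ < ε / 3 / (R + 1) := by
      rwa [dist_eq_norm] at hy
    have hRd : ∀ n, |⟪u n, Pw - d k⟫| ≤ R * (ε / 3 / (R + 1)) := by
      intro n
      calc |⟪u n, Pw - d k⟫| ≤ ‖u n‖ * ‖Pw - d k‖ := abs_real_inner_le_norm _ _
        _ ≤ R * (ε / 3 / (R + 1)) := by
            apply mul_le_mul (hR n) hdk.le (norm_nonneg _) hR0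
    have hRd' : R * (ε / 3 / (R + 1)) ≤ ε / 3 := by
      have hpos : (0:ℝ) < R + 1 := by positivity
      calc R * (ε / 3 / (R + 1)) ≤ (R + 1) * (ε / 3 / (R + 1)) := by
            apply mul_le_mul_of_nonneg_right (by linarith) (by positivity)
        _ = ε / 3 := by field_simp
    -- Cauchy of the k-th coordinate sequence
    have hck : CauchySeq fun i => ⟪u (φ i), d k⟫ := (hgk k).cauchySeq
    rw [Metric.cauchySeq_iff] at hck
    obtain ⟨N, hN⟩ := hck (ε / 3) (by positivity)
    refine ⟨N, fun m hm n hn => ?_⟩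
    have h1 := hRd (φ m)
    have h2 := hRd (φ n)
    have h3 := hN m hm n hn
    rw [Real.dist_eq] at h3 ⊢
    rw [hperp (φ m), hperp (φ n)]
    have e1 : ⟪u (φ m), Pw⟫ = ⟪u (φ m), Pw - d k⟫ + ⟪u (φ m), d k⟫ := by
      rw [inner_sub_right]; ring
    have e2 : ⟪u (φ n), Pw⟫ = ⟪u (φ n), Pw - d k⟫ + ⟪u (φ n), d k⟫ := by
      rw [inner_sub_right]; ring
    rw [e1, e2]
    have key : ∀ A B A' B' : ℝ, |A + B - (A' + B')| ≤ |A| + |B - B'| + |A'| := by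
      intro A B A' B'
      have h := abs_add_le (A + (B - B')) (-A')
      have h' := abs_add_le A (B - B')
      rw [abs_neg] at h
      have e : A + B - (A' + B') = A + (B - B') + -A' := by ring
      rw [e]
      linarith
    have := key ⟪u (φ m), Pw - d k⟫ ⟪u (φ m), d k⟫ ⟪u (φ n), Pw - d k⟫ ⟪u (φ n), d k⟫
    linarith
  -- limits exist; package them into a continuous linear functional
  have hlim : ∀ w : H, ∃ l : ℝ, Tendsto (fun i => ⟪u (φ i), w⟫) atTop (𝓝 l) :=
    fun w => cauchySeq_tendsto_of_complete (hcauchy w)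
  choose L hL using hlim
  have hLadd : ∀ w₁ w₂, L (w₁ + w₂) = L w₁ + L w₂ := by
    intro w₁ w₂
    refine tendsto_nhds_unique (hL (w₁ + w₂)) ?_
    have : (fun i => ⟪u (φ i), w₁ + w₂⟫) = fun i => ⟪u (φ i), w₁⟫ + ⟪u (φ i), w₂⟫ := by
      funext i; rw [inner_add_right]
    rw [this]
    exact (hL w₁).add (hL w₂)
  have hLsmul : ∀ (r : ℝ) (w : H), L (r • w) = r * L w := by
    intro r w
    refine tendsto_nhds_unique (hL (r • w)) ?_
    have : (fun i => ⟪u (φ i), r • w⟫) = fun i => r * ⟪u (φ i), w⟫ := by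
      funext i; rw [real_inner_smul_right]
    rw [this]
    exact (hL w).const_mul r
  have hLbound : ∀ w, |L w| ≤ R * ‖w‖ := by
    intro w
    have : Tendsto (fun i => |⟪u (φ i), w⟫|) atTop (𝓝 |L w|) := (hL w).abs
    refine le_of_tendsto this (Eventually.of_forall fun i => ?_)
    calc |⟪u (φ i), w⟫| ≤ ‖u (φ i)‖ * ‖w‖ := abs_real_inner_le_norm _ _
      _ ≤ R * ‖w‖ := by gcongr; exact hR _
  let Lmap : H →ₗ[ℝ] ℝ :=
    { toFun := L, map_add' := hLadd, map_smul' := hLsmul }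
  let L' : H →L[ℝ] ℝ := LinearMap.mkContinuous Lmap R fun w => by
    simpa [Lmap, Real.norm_eq_abs] using hLbound w
  refine ⟨(InnerProductSpace.toDual ℝ H).symm L', fun w => ?_⟩
  have : ⟪(InnerProductSpace.toDual ℝ H).symm L', w⟫ = L' w :=
    InnerProductSpace.toDual_symm_apply
  rw [this]
  exact hL w

/-- Mosco convergence of nonempty closed convex sets `C n → C 0` in a real Hilbert space
implies strong convergence of the metric projections `proj_{C n}(f) → proj_{C 0}(f)` for
every `f`.  The projections are characterized by their variational inequalities. -/
theorem proj_strong_convergence_of_mosco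
    {H : Type*} [NormedAddCommGroup H] [InnerProductSpace ℝ H] [CompleteSpace H]
    (C : ℕ → Set H) (C0 : Set H)
    (hne : ∀ n, (C n).Nonempty) (hcl : ∀ n, IsClosed (C n)) (hcv : ∀ n, Convex ℝ (C n))
    (hne0 : C0.Nonempty) (hcl0 : IsClosed C0) (hcv0 : Convex ℝ C0)
    -- (M1): weak limits of subsequences of elements of the `C n` belong to `C0`
    (M1 : ∀ φ : ℕ → ℕ, StrictMono φ → ∀ (v : ℕ → H) (v0 : H),
      (∀ i, v i ∈ C (φ i)) →
      (∀ w : H, Tendsto (fun i => ⟪v i, w⟫) atTop (𝓝 ⟪v0, w⟫)) → v0 ∈ C0)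
    -- (M2): every point of `C0` has a strongly convergent recovery sequence
    (M2 : ∀ v0 ∈ C0, ∃ v : ℕ → H, (∀ n, v n ∈ C n) ∧
      Tendsto (fun n => ‖v n - v0‖) atTop (𝓝 0))
    (f : H) (u : ℕ → H) (u0 : H)
    (hu : ∀ n, u n ∈ C n) (hproj : ∀ n, ∀ v ∈ C n, 0 ≤ ⟪u n - f, v - u n⟫)
    (hu0 : u0 ∈ C0) (hproj0 : ∀ v ∈ C0, 0 ≤ ⟪u0 - f, v - u0⟫) :
    Tendsto (fun n => ‖u n - u0‖) atTop (𝓝 0) := by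
  obtain ⟨v, hv, hvtend⟩ := M2 u0 hu0
  -- the projections are dominated in distance to `f` by the recovery sequence
  have hunf : ∀ n, ‖u n - f‖ ≤ ‖v n - f‖ := by
    intro n
    have h0 := hproj n (v n) (hv n)
    have e : v n - u n = (v n - f) - (u n - f) := by abel
    rw [e, inner_sub_right] at h0
    have h2 : ⟪u n - f, v n - f⟫ ≤ ‖u n - f‖ * ‖v n - f‖ := real_inner_le_norm _ _
    have h3 : ‖u n - f‖ ^ 2 ≤ ‖u n - f‖ * ‖v n - f‖ := by
      rw [← real_inner_self_eq_norm_sq]; linarith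
    rcases eq_or_lt_of_le (norm_nonneg (u n - f)) with h | h
    · rw [← h]; exact norm_nonneg _
    · nlinarith
  -- a uniform bound
  obtain ⟨B, hB⟩ : BddAbove (Set.range fun n => ‖v n - u0‖) := hvtend.bddAbove_range
  set B' : ℝ := B + ‖u0 - f‖ with hB'def
  have hvB : ∀ n, ‖v n - f‖ ≤ B' := by
    intro n
    have h1 : ‖v n - u0‖ ≤ B := hB ⟨n, rfl⟩
    calc ‖v n - f‖ = ‖(v n - u0) + (u0 - f)‖ := by rw [sub_add_sub_cancel]
      _ ≤ ‖v n - u0‖ + ‖u0 - f‖ := norm_add_le _ _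
      _ ≤ B' := by rw [hB'def]; linarith
  have hB'nonneg : 0 ≤ B' := le_trans (norm_nonneg _) (hvB 0)
  have huB : ∀ n, ‖u n - f‖ ≤ B' := fun n => (hunf n).trans (hvB n)
  set R : ℝ := B' + ‖f‖ with hRdef
  have huR : ∀ n, ‖u n‖ ≤ R := by
    intro n
    calc ‖u n‖ = ‖(u n - f) + f‖ := by rw [sub_add_cancel]
      _ ≤ ‖u n - f‖ + ‖f‖ := norm_add_le _ _
      _ ≤ R := by rw [hRdef]; linarith [huB n]
  -- the key inequality
  have hkey : ∀ n, ‖u n - u0‖ ^ 2 ≤ B' * ‖v n - u0‖ + ⟪f - u0, u n - u0⟫ := by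
    intro n
    have h0 := hproj n (v n) (hv n)
    have e1 : ⟪u n - f, u n - u0⟫ ≤ ⟪u n - f, v n - u0⟫ := by
      have e : v n - u0 = (v n - u n) + (u n - u0) := by abel
      rw [e, inner_add_right]; linarith
    have e2 : ⟪u n - f, v n - u0⟫ ≤ ‖u n - f‖ * ‖v n - u0‖ := real_inner_le_norm _ _
    have e3 : ‖u n - f‖ * ‖v n - u0‖ ≤ B' * ‖v n - u0‖ :=
      mul_le_mul_of_nonneg_right (huB n) (norm_nonneg _)
    have e4 : ‖u n - u0‖ ^ 2 = ⟪u n - f, u n - u0⟫ + ⟪f - u0, u n - u0⟫ := by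
      rw [← real_inner_self_eq_norm_sq, ← inner_add_left,
        show (u n - f) + (f - u0) = u n - u0 from by abel]
    linarith
  -- argue by contradiction, extracting a bad subsequence
  by_contra hcon
  rw [Metric.tendsto_atTop] at hcon
  push_neg at hcon
  obtain ⟨ε, hε, hcon⟩ := hcon
  have hfr : ∃ᶠ n in atTop, ε ≤ ‖u n - u0‖ := by
    refine frequently_atTop.2 fun N => ?_
    obtain ⟨n, hn1, hn2⟩ := hcon N
    refine ⟨n, hn1, ?_⟩
    rwa [Real.dist_eq, sub_zero, abs_of_nonneg (norm_nonneg _)] at hn2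
  obtain ⟨ψ, hψ, hψε⟩ := Filter.extraction_of_frequently_atTop hfr
  -- extract a weakly convergent sub-subsequence, its limit is in `C0` by (M1)
  obtain ⟨φ, hφ, z, hz⟩ := exists_weak_subseq (fun i => u (ψ i)) R (fun i => huR (ψ i))
  have hzC0 : z ∈ C0 :=
    M1 (ψ ∘ φ) (hψ.comp hφ) (fun i => u (ψ (φ i))) z (fun i => hu _) hz
  have hzneg : ⟪f - u0, z - u0⟫ ≤ 0 := by
    have h1 := hproj0 z hzC0
    have e : ⟪f - u0, z - u0⟫ = -⟪u0 - f, z - u0⟫ := by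
      rw [show f - u0 = -(u0 - f) from by abel, inner_neg_left]
    linarith
  -- the linear term converges to a nonpositive limit along the subsequence
  have ha : Tendsto (fun i => ⟪f - u0, u (ψ (φ i)) - u0⟫) atTop (𝓝 ⟪f - u0, z - u0⟫) := by
    have h1 := (hz (f - u0)).sub_const ⟪u0, f - u0⟫
    have e : ∀ x : H, ⟪f - u0, x - u0⟫ = ⟪x, f - u0⟫ - ⟪u0, f - u0⟫ := by
      intro x
      rw [inner_sub_right, real_inner_comm x (f - u0), real_inner_comm u0 (f - u0)]
    simp only [e]
    exact h1
  have hbtend : Tendsto (fun i => B' * ‖v (ψ (φ i)) - u0‖) atTop (𝓝 0) := by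
    have h1 := (hvtend.comp ((hψ.comp hφ).tendsto_atTop)).const_mul B'
    simpa using h1
  -- derive the contradiction
  have hhalf : (0 : ℝ) < ε ^ 2 / 2 := by positivity
  have h1 : ∀ᶠ i in atTop, ⟪f - u0, u (ψ (φ i)) - u0⟫ < ε ^ 2 / 2 :=
    ha.eventually (Filter.Tendsto.eventually_lt_const (lt_of_le_of_lt hzneg hhalf) tendsto_id) |>.mono
      fun i hi => hi
  have h2 : ∀ᶠ i in atTop, B' * ‖v (ψ (φ i)) - u0‖ < ε ^ 2 / 2 :=
    hbtend.eventually (Filter.Tendsto.eventually_lt_const hhalf tendsto_id) |>.mono fun i hi => hi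
  obtain ⟨i, hi1, hi2⟩ := (h1.and h2).exists
  have hge : ε ≤ ‖u (ψ (φ i)) - u0‖ := hψε (φ i)
  have hsq : ε ^ 2 ≤ ‖u (ψ (φ i)) - u0‖ ^ 2 := by nlinarith
  have hk := hkey (ψ (φ i))
  have hi1' : ⟪f - u0, u (ψ (φ i)) - u0⟫ < ε ^ 2 / 2 := hi1
  have hi2' : B' * ‖v (ψ (φ i)) - u0‖ < ε ^ 2 / 2 := hi2
  clear_value B' R
  have t1 : B' * ‖v (ψ (φ i)) - u0‖ + ⟪f - u0, u (ψ (φ i)) - u0⟫ < ε ^ 2 := by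
    linarith [hi1', hi2']
  have t2 : ε ^ 2 < ε ^ 2 := lt_of_le_of_lt (hsq.trans hk) t1
  exact lt_irrefl _ t2
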